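/- Every feasible point (beta_0,...,beta_{2^d-1}, M) of the investor's linear program satisfies M >= 2^{-d} * sum over m in {0,1}^d of (q(m) - r(m))^2. -/

import Mathlib

/-- The left-shift map of the `d`-dimensional de Bruijn graph on 2 symbols. -/
def deBruijnShift (d : ℕ) (m : Fin d → Bool) (c : Bool) : Fin d → Bool :=
  fun i => if h : (i : ℕ) + 1 < d then m ⟨(i : ℕ) + 1, h⟩ else c

/-- A simple cycle of the de Bruijn graph, recorded as the list of its edges
`(vertex, label)`: each edge leads to the next vertex (cyclically), and no
vertex is repeated. -/
def IsSimpleCycleDB (d : ℕ) (L : List ((Fin d → Bool) × Bool)) : Prop :=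
  L ≠ [] ∧ (L.map Prod.fst).Nodup ∧
  ∀ i : Fin L.length,
    deBruijnShift d (L.get i).1 (L.get i).2
      = (L.get ⟨((i : ℕ) + 1) % L.length, Nat.mod_lt _ i.pos⟩).1

open Function Finset

section Key

variable {d : ℕ} {V : Type*}

/-- every point of an injective self-map of a finite type is periodic -/
lemma mem_periodicPts_of_injective [Fintype V] {f : V → V} (hf : Function.Injective f) (m : V) :
    m ∈ periodicPts f := by
  have : ¬ Function.Injective (fun k : Fin (Fintype.card V + 1) => f^[(k : ℕ)] m) := by
    intro h
    have := Fintype.card_le_of_injective _ h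
    simp at this
  rw [Function.not_injective_iff] at this
  obtain ⟨a, b, hab, hne⟩ := this
  have hne' : (a : ℕ) ≠ (b : ℕ) := fun h => hne (Fin.ext h)
  rcases lt_or_gt_of_ne hne' with h | h
  · refine ⟨(b : ℕ) - a, by omega, ?_⟩
    have : f^[(a:ℕ)] (f^[(b:ℕ) - a] m) = f^[(a:ℕ)] m := by
      rw [← Function.iterate_add_apply]
      rw [show (a:ℕ) + ((b:ℕ) - a) = (b:ℕ) by omega]
      exact hab.symm
    exact (hf.iterate _ this)
  · refine ⟨(a : ℕ) - b, by omega, ?_⟩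
    have : f^[(b:ℕ)] (f^[(a:ℕ) - b] m) = f^[(b:ℕ)] m := by
      rw [← Function.iterate_add_apply]
      rw [show (b:ℕ) + ((a:ℕ) - b) = (a:ℕ) by omega]
      exact hab
    exact (hf.iterate _ this)

end Key

/-- Key lemma: summing constraints over orbit decomposition of an invariant finset. -/
lemma orbit_sum_bound (d : ℕ) (q r β : (Fin d → Bool) → ℝ) (M : ℝ)
    (hfeas : ∀ L : List ((Fin d → Bool) × Bool), IsSimpleCycleDB d L →
      (L.map fun e => (q e.1 - r e.1) ^ 2 - (if e.2 then β e.1 else -β e.1)).sum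
        ≤ (L.length : ℝ) * M)
    (f : (Fin d → Bool) → (Fin d → Bool)) (c : (Fin d → Bool) → Bool)
    (hf : Function.Injective f) (hc : ∀ m, deBruijnShift d m (c m) = f m) :
    ∀ (n : ℕ) (S : Finset (Fin d → Bool)), S.card = n → (∀ x ∈ S, f x ∈ S) →
      (∑ m ∈ S, ((q m - r m) ^ 2 - (if c m then β m else -β m))) ≤ S.card * M := by
  intro n
  induction n using Nat.strong_induction_on with
  | _ n ih =>
    intro S hcard hinv
    rcases S.eq_empty_or_nonempty with rfl | ⟨m, hm⟩
    · simp
    -- orbit of m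
    set p := Function.minimalPeriod f m with hp
    have hmem : m ∈ Function.periodicPts f := mem_periodicPts_of_injective hf m
    have hppos : 0 < p := Function.minimalPeriod_pos_of_mem_periodicPts hmem
    have hper : f^[p] m = m := Function.isPeriodicPt_minimalPeriod f m
    have hinj : Set.InjOn (fun k => f^[k] m) (Set.Iio p) :=
      Function.iterate_injOn_Iio_minimalPeriod
    set O : Finset (Fin d → Bool) := (Finset.range p).image (fun k => f^[k] m) with hO
    have hOcard : O.card = p := by
      rw [hO, Finset.card_image_of_injOn, Finset.card_range]
      intro a ha b hb hab
      exact hinj (by simpa using ha) (by simpa using hb) hab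
    -- the simple cycle
    set L : List ((Fin d → Bool) × Bool) :=
      (List.range p).map (fun k => (f^[k] m, c (f^[k] m))) with hL
    have hLlen : L.length = p := by simp [hL]
    have hget : ∀ (k : ℕ) (h : k < L.length), L.get ⟨k, h⟩ = (f^[k] m, c (f^[k] m)) := by
      intro k h
      simp [hL]
    have hcyc : IsSimpleCycleDB d L := by
      refine ⟨?_, ?_, ?_⟩
      · intro h
        have := congrArg List.length h
        simp [hLlen] at this
        omega
      · have : L.map Prod.fst = (List.range p).map (fun k => f^[k] m) := by
          rw [hL, List.map_map]; rfl
        rw [this]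
        apply List.Nodup.map_on _ (List.nodup_range : (List.range p).Nodup)
        intro a ha b hb hab
        exact hinj (by simpa using List.mem_range.mp ha)
          (by simpa using List.mem_range.mp hb) hab
      · intro i
        obtain ⟨iv, hiv⟩ := i
        rw [hget iv hiv]
        simp only
        rw [hget ((iv+1) % L.length) (Nat.mod_lt _ (by omega))]
        simp only
        rw [hc]
        have hmod : (iv+1) % L.length = (iv+1) % p := by rw [hLlen]
        rw [hmod]
        calc f (f^[iv] m) = f^[iv+1] m := by
              rw [← Function.iterate_succ_apply' f]
          _ = f^[(iv+1) % p] m := by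
              rw [Function.iterate_mod_minimalPeriod_eq]
    -- the constraint for this cycle
    have hcon := hfeas L hcyc
    have hsumL : (L.map fun e => (q e.1 - r e.1) ^ 2 - (if e.2 then β e.1 else -β e.1)).sum
        = ∑ x ∈ O, ((q x - r x) ^ 2 - (if c x then β x else -β x)) := by
      have h1 : (L.map fun e => (q e.1 - r e.1) ^ 2 - (if e.2 then β e.1 else -β e.1)).sum
          = ∑ k ∈ Finset.range p, ((q (f^[k] m) - r (f^[k] m)) ^ 2 -
              (if c (f^[k] m) then β (f^[k] m) else -β (f^[k] m))) := by
        rw [hL, List.map_map]; rfl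
      rw [h1, hO, Finset.sum_image (fun a ha b hb hab =>
        hinj (by simpa using ha) (by simpa using hb) hab)]
    -- orbit inside S
    have hOS : O ⊆ S := by
      intro x hx
      rw [hO] at hx
      obtain ⟨k, hk, rfl⟩ := Finset.mem_image.mp hx
      clear hk hx
      induction k with
      | zero => simpa using hm
      | succ k ihk => rw [Function.iterate_succ_apply']; exact hinv _ ihk
    have hOf : ∀ x ∈ O, f x ∈ O := by
      intro x hx
      rw [hO] at hx ⊢
      obtain ⟨k, hk, rfl⟩ := Finset.mem_image.mp hx
      refine Finset.mem_image.mpr ⟨(k+1) % p, Finset.mem_range.mpr (Nat.mod_lt _ hppos), ?_⟩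
      rw [Function.iterate_mod_minimalPeriod_eq, ← Function.iterate_succ_apply' f]
    -- S \ O is invariant
    have hinv' : ∀ x ∈ S \ O, f x ∈ S \ O := by
      intro x hx
      rw [Finset.mem_sdiff] at hx ⊢
      refine ⟨hinv _ hx.1, fun hfx => hx.2 ?_⟩
      rw [hO] at hfx ⊢
      obtain ⟨k, hk, hkx⟩ := Finset.mem_image.mp hfx
      rcases Nat.eq_zero_or_pos k with rfl | hkpos
      · refine Finset.mem_image.mpr ⟨p - 1, Finset.mem_range.mpr (by omega), ?_⟩
        apply hf
        calc f (f^[p-1] m) = f^[p-1+1] m := (Function.iterate_succ_apply' f _ m).symm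
          _ = f^[p] m := by rw [show p-1+1 = p by omega]
          _ = m := hper
          _ = f x := by simpa using hkx
      · have hk' := Finset.mem_range.mp hk
        refine Finset.mem_image.mpr ⟨k - 1, Finset.mem_range.mpr (by omega), ?_⟩
        apply hf
        calc f (f^[k-1] m) = f^[k-1+1] m := (Function.iterate_succ_apply' f _ m).symm
          _ = f^[k] m := by rw [show k-1+1 = k by omega]
          _ = f x := hkx
    have hOcard_pos : 0 < O.card := by rw [hOcard]; exact hppos
    have hcard' : (S \ O).card < n := by
      rw [← hcard]
      have := Finset.card_sdiff_add_card_eq_card hOS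
      omega
    have hrec := ih _ hcard' (S \ O) rfl hinv'
    have hsplit : ∑ x ∈ S, ((q x - r x) ^ 2 - (if c x then β x else -β x))
        = ∑ x ∈ O, ((q x - r x) ^ 2 - (if c x then β x else -β x))
          + ∑ x ∈ S \ O, ((q x - r x) ^ 2 - (if c x then β x else -β x)) := by
      rw [add_comm, Finset.sum_sdiff hOS]
    rw [hsplit]
    have hcards : (S.card : ℝ) = (O.card : ℝ) + ((S \ O).card : ℝ) := by
      have h3 := Finset.card_sdiff_add_card_eq_card hOS
      rw [← h3]
      push_cast
      ring
    rw [hcards, add_mul]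
    apply add_le_add
    · rw [← hsumL, hOcard, ← hLlen]; exact hcon
    · exact hrec

lemma shift_injective (d : ℕ) (c : (Fin d → Bool) → Bool)
    (hc : ∀ a b : Fin d → Bool, c a = c b → ∀ hd : 0 < d, a ⟨0, hd⟩ = b ⟨0, hd⟩) :
    Function.Injective (fun m => deBruijnShift d m (c m)) := by
  intro a b hab
  funext i
  have hd : 0 < d := i.pos
  rcases Nat.eq_zero_or_pos (i : ℕ) with h0 | h1
  · have := congrFun hab ⟨d - 1, by omega⟩
    simp only [deBruijnShift] at this
    rw [dif_neg (by omega), dif_neg (by omega)] at this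
    have h00 := hc a b this hd
    have : i = (⟨0, hd⟩ : Fin d) := Fin.ext h0
    rw [this]; exact h00
  · have := congrFun hab ⟨(i : ℕ) - 1, by omega⟩
    simp only [deBruijnShift] at this
    rw [dif_pos (by omega : (i:ℕ) - 1 + 1 < d), dif_pos (by omega : (i:ℕ) - 1 + 1 < d)] at this
    have hieq : (⟨(i:ℕ) - 1 + 1, by omega⟩ : Fin d) = i :=
      Fin.ext (by show (i:ℕ) - 1 + 1 = (i:ℕ); omega)
    rw [hieq] at this
    exact this

/-- Every feasible point `(β, M)` of the investor's linear program (one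
constraint per simple cycle `s`: `∑_{m ∈ s} [(q m - r m)² - b_{s,m} β m] ≤ |s| M`)
satisfies `M ≥ 2^{-d} ∑_m (q m - r m)²`. -/
theorem investor_LP_lower_bound (d : ℕ) (q r β : (Fin d → Bool) → ℝ) (M : ℝ)
    (hfeas : ∀ L : List ((Fin d → Bool) × Bool), IsSimpleCycleDB d L →
      (L.map fun e => (q e.1 - r e.1) ^ 2 - (if e.2 then β e.1 else -β e.1)).sum
        ≤ (L.length : ℝ) * M) :
    (∑ m : Fin d → Bool, (q m - r m) ^ 2) / 2 ^ d ≤ M := by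
  set c : (Fin d → Bool) → Bool := fun m => if h : 0 < d then m ⟨0, h⟩ else true with hcdef
  set c' : (Fin d → Bool) → Bool := fun m => !(c m) with hc'def
  have hcprop : ∀ a b : Fin d → Bool, c a = c b → ∀ hd : 0 < d, a ⟨0, hd⟩ = b ⟨0, hd⟩ := by
    intro a b hab hd
    simpa [hcdef, dif_pos hd] using hab
  have hc'prop : ∀ a b : Fin d → Bool, c' a = c' b → ∀ hd : 0 < d, a ⟨0, hd⟩ = b ⟨0, hd⟩ := by
    intro a b hab hd
    apply hcprop a b _ hd
    simpa [hc'def] using hab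
  have h1 := orbit_sum_bound d q r β M hfeas _ c (shift_injective d c hcprop)
    (fun m => rfl) (Finset.univ.card) Finset.univ rfl (by simp)
  have h2 := orbit_sum_bound d q r β M hfeas _ c' (shift_injective d c' hc'prop)
    (fun m => rfl) (Finset.univ.card) Finset.univ rfl (by simp)
  have hflip : ∀ m, (if c' m then β m else -β m) = -(if c m then β m else -β m) := by
    intro m
    simp only [hc'def]
    cases c m <;> simp
  have hcard : (Finset.univ : Finset (Fin d → Bool)).card = 2 ^ d := by
    simp [Finset.card_univ]
  rw [div_le_iff₀ (by positivity : (0:ℝ) < 2 ^ d)]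
  have key : 2 * ∑ m : Fin d → Bool, (q m - r m) ^ 2 ≤ 2 * (2 ^ d * M) := by
    have e1 : ∑ m : Fin d → Bool, ((q m - r m) ^ 2 - (if c m then β m else -β m))
        + ∑ m : Fin d → Bool, ((q m - r m) ^ 2 - (if c' m then β m else -β m))
        = 2 * ∑ m : Fin d → Bool, (q m - r m) ^ 2 := by
      rw [← Finset.sum_add_distrib]
      rw [Finset.mul_sum]
      apply Finset.sum_congr rfl
      intro m _
      rw [hflip m]
      ring
    have := add_le_add h1 h2
    rw [e1] at this
    rw [hcard] at this
    push_cast at this ⊢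
    linarith
  linarith
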